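/- Let G=(W,E) be a simple undirected graph with W={w_1,…,w_{3q}}, let (N,V) be the instance of 3D-SR-AS-BIN constructed from G by the reduction, and let M be a stable matching in (N,V) with |M| = |N|/3. Then u_{b_i}(M) = 2 for every 1 ≤ i ≤ 3q. -/
import Mathlib


open Finset

variable {A : Type*}

/-- `M` is a matching on agent set `N`: a set of pairwise disjoint triples of agents of `N`. -/
def IsMatching [DecidableEq A] (N : Finset A) (M : Finset (Finset A)) : Prop :=
  (∀ t ∈ M, t.card = 3 ∧ t ⊆ N) ∧ ∀ t ∈ M, ∀ s ∈ M, t ≠ s → Disjoint t s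

/-- The (additively separable) utility of agent `a` in matching `M` under valuations `val`:
the sum, over the triples of `M` containing `a`, of the valuations by `a` of the other
members; this is `0` if `a` is unmatched, and for a genuine matching it is the sum of the
valuations of `a`'s two partners. -/
def utility [DecidableEq A] (val : A → A → ℤ) (M : Finset (Finset A)) (a : A) : ℤ :=
  ∑ t ∈ M.filter (fun t => a ∈ t), ∑ b ∈ t.erase a, val a b

/-- The triple consisting of the three distinct agents `x, y, z` of `N` blocks `M`. -/
def Blocks [DecidableEq A] (N : Finset A) (val : A → A → ℤ) (M : Finset (Finset A))
    (x y z : A) : Prop :=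
  x ∈ N ∧ y ∈ N ∧ z ∈ N ∧ x ≠ y ∧ x ≠ z ∧ y ≠ z ∧
  utility val M x < val x y + val x z ∧
  utility val M y < val y x + val y z ∧
  utility val M z < val z x + val z y

/-- `M` is stable: no triple of agents of `N` blocks it. -/
def IsStable [DecidableEq A] (N : Finset A) (val : A → A → ℤ) (M : Finset (Finset A)) : Prop :=
  ∀ x y z : A, ¬ Blocks N val M x y z

/-- Binary symmetric preferences on `N`. -/
def BinSym [DecidableEq A] (N : Finset A) (val : A → A → ℤ) : Prop :=
  (∀ a ∈ N, ∀ b ∈ N, a ≠ b → val a b = 0 ∨ val a b = 1) ∧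
  (∀ a ∈ N, ∀ b ∈ N, val a b = val b a)

/-- A `P`-matching: a matching in which every matched agent has strictly positive utility. -/
def IsPMatching [DecidableEq A] (N : Finset A) (val : A → A → ℤ)
    (M : Finset (Finset A)) : Prop :=
  IsMatching N M ∧ ∀ a : A, (∃ t ∈ M, a ∈ t) → 0 < utility val M a

/-- `x, y, z` form a triangle: three distinct agents of `N` whose pairwise valuations
all equal `1`. -/
def IsTriangle [DecidableEq A] (N : Finset A) (val : A → A → ℤ) (x y z : A) : Prop :=
  x ∈ N ∧ y ∈ N ∧ z ∈ N ∧ x ≠ y ∧ x ≠ z ∧ y ≠ z ∧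
  val x y = 1 ∧ val y z = 1 ∧ val x z = 1

/-- The instance contains no triangle. -/
def TriangleFree [DecidableEq A] (N : Finset A) (val : A → A → ℤ) : Prop :=
  ∀ x y z : A, ¬ IsTriangle N val x y z

open Finset

/-- The agents of the instance constructed by the reduction from
Partition Into Triangles: `a i s` (for `s : Fin 2`), `b i` for each vertex `i`,
and pentagadget agents `p r t` (`t : Fin 5`, representing `p_r^{t+1}`). -/
inductive Agent (q : ℕ) : Type where
  | a : Fin (3*q) → Fin 2 → Agent q
  | b : Fin (3*q) → Agent q
  | p : Fin (6*q) → Fin 5 → Agent q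
  deriving DecidableEq, Fintype

/-- The valuation function of the instance constructed by the reduction from the graph `G`.
Note that, within a pentagadget, `p_r^t` assigns valuation `1` exactly to
`p_r^{t+1}, p_r^{t+2}, p_r^{t+4}` (indices mod 5). -/
def redVal (q : ℕ) (G : SimpleGraph (Fin (3*q))) [DecidableRel G.Adj] :
    Agent q → Agent q → ℤ
  | .a i s, .a j s' => if i = j ∧ s ≠ s' then 1 else 0
  | .a i _, .b j => if i = j then 1 else 0
  | .b i, .a j _ => if i = j then 1 else 0
  | .b i, .b j => if G.Adj i j then 1 else 0
  | .p r t, .p r' t' => if r = r' ∧ (t' - t = 1 ∨ t' - t = 2 ∨ t' - t = 4) then 1 else 0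
  | _, _ => 0

/-- A partition of the vertices of `G` into triangles. -/
def IsTrianglePartition {n : ℕ} (G : SimpleGraph (Fin n))
    (X : Finset (Finset (Fin n))) : Prop :=
  (∀ t ∈ X, t.card = 3 ∧ ∀ u ∈ t, ∀ v ∈ t, u ≠ v → G.Adj u v) ∧
  (∀ t ∈ X, ∀ s ∈ X, t ≠ s → Disjoint t s) ∧
  ∀ v : Fin n, ∃ t ∈ X, v ∈ t



section Helpers

variable {q : ℕ} (G : SimpleGraph (Fin (3*q))) [DecidableRel G.Adj]

lemma redVal_nonneg (x y : Agent q) : 0 ≤ redVal q G x y := by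
  cases x <;> cases y <;> simp only [redVal] <;> (try split_ifs) <;> norm_num

lemma redVal_le_one (x y : Agent q) : redVal q G x y ≤ 1 := by
  cases x <;> cases y <;> simp only [redVal] <;> (try split_ifs) <;> norm_num

lemma filter_mem_matching {N : Finset A} {M : Finset (Finset A)} [DecidableEq A]
    (hM : IsMatching N M) {t : Finset A} (ht : t ∈ M) {a : A} (ha : a ∈ t) :
    M.filter (fun s => a ∈ s) = {t} := by
  ext s
  simp only [Finset.mem_filter, Finset.mem_singleton]
  constructor
  · rintro ⟨hs, has⟩
    by_contra hne
    exact (Finset.disjoint_left.mp (hM.2 s hs t ht hne) has) ha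
  · rintro rfl
    exact ⟨ht, ha⟩

lemma utility_eq_of_mem {N : Finset A} {M : Finset (Finset A)} [DecidableEq A]
    {val : A → A → ℤ} (hM : IsMatching N M) {t : Finset A} (ht : t ∈ M) {a : A} (ha : a ∈ t) :
    utility val M a = ∑ b ∈ t.erase a, val a b := by
  rw [utility, filter_mem_matching hM ht ha, Finset.sum_singleton]

lemma utility_eq_zero_of_unmatched {N : Finset A} {M : Finset (Finset A)} [DecidableEq A]
    {val : A → A → ℤ} {a : A} (h : ¬ ∃ t ∈ M, a ∈ t) :
    utility val M a = 0 := by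
  have : M.filter (fun s => a ∈ s) = ∅ := by
    rw [Finset.filter_eq_empty_iff]
    intro t ht hat
    exact h ⟨t, ht, hat⟩
  rw [utility, this, Finset.sum_empty]

end Helpers

/-- In any stable matching of the reduced instance in which every agent is matched, every
agent `b_i` has utility `2`. -/
theorem b_agents_utility_two
    (q : ℕ) (G : SimpleGraph (Fin (3*q))) [DecidableRel G.Adj]
    (M : Finset (Finset (Agent q)))
    (hM : IsMatching (Finset.univ : Finset (Agent q)) M)
    (hstable : IsStable Finset.univ (redVal q G) M)
    (hcard : M.card = 13 * q) (i : Fin (3*q)) :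
    utility (redVal q G) M (Agent.b i) = 2 := by
  classical
  have hcard2 : ∀ t ∈ M, ∀ a ∈ t, (t.erase a).card = 2 := by
    intro t ht a ha
    rw [Finset.card_erase_of_mem ha, (hM.1 t ht).1]
  -- upper bound: every agent has utility at most 2
  have hub : ∀ a : Agent q, utility (redVal q G) M a ≤ 2 := by
    intro a
    by_cases h : ∃ t ∈ M, a ∈ t
    · obtain ⟨t, ht, ha⟩ := h
      rw [utility_eq_of_mem hM ht ha]
      calc ∑ b ∈ t.erase a, redVal q G a b ≤ ∑ _b ∈ t.erase a, (1 : ℤ) :=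
            Finset.sum_le_sum (fun b _ => redVal_le_one G a b)
        _ = 2 := by rw [Finset.sum_const, hcard2 t ht a ha]; norm_num
    · rw [utility_eq_zero_of_unmatched (N := (Finset.univ : Finset (Agent q))) h]; norm_num
  -- key: utility of b i is at least 2
  have key : ¬ utility (redVal q G) M (Agent.b i) < 2 := by
    intro hlt
    have hfin2 : ∀ u v : Fin 2, u ≠ v → v = u + 1 := by decide
    have ha : ∀ s : Fin 2, utility (redVal q G) M (Agent.a i s) < 2 := by
      intro s
      by_contra hge
      push_neg at hge
      have hm : ∃ t ∈ M, Agent.a i s ∈ t := by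
        by_contra hm
        rw [utility_eq_zero_of_unmatched (N := (Finset.univ : Finset (Agent q))) hm] at hge
        omega
      obtain ⟨t, ht, hat⟩ := hm
      rw [utility_eq_of_mem hM ht hat] at hge
      obtain ⟨x, y, hxy, hpair⟩ := Finset.card_eq_two.mp (hcard2 t ht _ hat)
      rw [hpair, Finset.sum_pair hxy] at hge
      have hx1 : 0 < redVal q G (Agent.a i s) x := by
        have := redVal_le_one G (Agent.a i s) y; omega
      have hy1 : 0 < redVal q G (Agent.a i s) y := by
        have := redVal_le_one G (Agent.a i s) x; omega
      have hchar : ∀ z : Agent q, 0 < redVal q G (Agent.a i s) z →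
          z = Agent.b i ∨ z = Agent.a i (s + 1) := by
        intro z hz
        cases z with
        | a j s' =>
          right
          simp only [redVal] at hz
          split_ifs at hz with h
          · obtain ⟨rfl, hss'⟩ := h
            rw [hfin2 s s' hss']
          · omega
        | b j =>
          left
          simp only [redVal] at hz
          split_ifs at hz with h
          · rw [h]
          · omega
        | p r t' => simp only [redVal] at hz; omega
      -- so {x,y} = {b i, a i (s+1)}, hence t = {a i s, b i, a i (s+1)}
      have hts : t = insert (Agent.a i s) ({x, y} : Finset (Agent q)) := by
        rw [← hpair, Finset.insert_erase hat]
      have hxy' : ({x, y} : Finset (Agent q)) = {Agent.b i, Agent.a i (s + 1)} := by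
        rcases hchar x hx1 with rfl | rfl <;> rcases hchar y hy1 with rfl | rfl
        · exact absurd rfl hxy
        · rfl
        · exact Finset.pair_comm _ _
        · exact absurd rfl hxy
      have hbt : Agent.b i ∈ t := by
        rw [hts, hxy']
        simp
      have herase : t.erase (Agent.b i) = {Agent.a i s, Agent.a i (s + 1)} := by
        rw [hts, hxy']
        ext z
        simp only [Finset.mem_erase, Finset.mem_insert, Finset.mem_singleton]
        constructor
        · rintro ⟨hz, h1 | h1 | h1⟩
          · exact Or.inl h1
          · exact absurd h1 hz
          · exact Or.inr h1
        · rintro (rfl | rfl)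
          · exact ⟨by simp, Or.inl rfl⟩
          · exact ⟨by simp, Or.inr (Or.inr rfl)⟩
      have hune : Agent.a i s ≠ Agent.a i (s + 1) := by
        have h2 : ∀ u : Fin 2, u ≠ u + 1 := by decide
        simp only [ne_eq, Agent.a.injEq, not_and]
        exact fun _ => h2 s
      have hu2 : utility (redVal q G) M (Agent.b i) = 2 := by
        rw [utility_eq_of_mem hM ht hbt, herase, Finset.sum_pair hune]
        simp [redVal]
      omega
    have e1 : redVal q G (Agent.a i 0) (Agent.a i 1) = 1 := by
      simp [redVal, Fin.ext_iff]
    have e2 : redVal q G (Agent.a i 0) (Agent.b i) = 1 := by simp [redVal]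
    have e3 : redVal q G (Agent.a i 1) (Agent.a i 0) = 1 := by
      simp [redVal, Fin.ext_iff]
    have e4 : redVal q G (Agent.a i 1) (Agent.b i) = 1 := by simp [redVal]
    have e5 : redVal q G (Agent.b i) (Agent.a i 0) = 1 := by simp [redVal]
    have e6 : redVal q G (Agent.b i) (Agent.a i 1) = 1 := by simp [redVal]
    have hd : ∀ u : Fin 2, (0 : Fin 2) ≠ 1 := by decide
    have hblock : Blocks (Finset.univ : Finset (Agent q)) (redVal q G) M
        (Agent.a i 0) (Agent.a i 1) (Agent.b i) := by
      refine ⟨Finset.mem_univ _, Finset.mem_univ _, Finset.mem_univ _, ?_, ?_, ?_, ?_, ?_, ?_⟩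
      · simp only [ne_eq, Agent.a.injEq, not_and]
        exact fun _ => hd 0
      · simp
      · simp
      · rw [e1, e2]
        have := ha 0
        omega
      · rw [e3, e4]
        have := ha 1
        omega
      · rw [e5, e6]
        omega
    exact hstable _ _ _ hblock
  exact le_antisymm (hub _) (not_lt.mp key)
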